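/- If λ is weakly inaccessible, ω<θ<λ is regular, and GH(θ,λ)=λ, then the set E={δ<λ : GH(θ,δ)=δ} is closed under suprema of increasing sequences of regular length >θ and is unbounded in λ. -/

import Mathlib

open Cardinal Set

namespace Paper

/-- `g < f` modulo the ideal of bounded subsets of `θ` (functions viewed on `Iio θ`). -/
def ltBd (θo : Ordinal) (g f : Ordinal → Ordinal) : Prop :=
  ∃ β < θo, ∀ i, β ≤ i → i < θo → g i < f i

/-- The ordinal rank of an accessible element of a relation:
`rank(a) = sup { rank(b) + 1 : b r a }`. -/
noncomputable def accRank {α : Type*} {r : α → α → Prop} {a : α} (h : Acc r a) : Ordinal.{0} :=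
  Acc.rec (motive := fun _ _ => Ordinal.{0})
    (fun x _ ih => sSup (Set.range fun y : {y : α // r y x} => Order.succ (ih y.1 y.2))) h

open scoped Classical in
/-- The Galvin–Hajnal rank `‖f‖` of `f : θ → ON` modulo the bounded ideal on `θ`:
`‖f‖ = sup {‖g‖ + 1 : g <_bd f}` (junk value `0` if `f` is not in the well-founded part). -/
noncomputable def GHrank (θo : Ordinal) (f : Ordinal → Ordinal) : Ordinal :=
  if h : Acc (ltBd θo) f then accRank h else 0

/-- `GH(θ, λ) = min { α : ∀ f : θ → λ, ‖f‖ < α }`. -/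
noncomputable def GHbound (θo lamo : Ordinal) : Ordinal :=
  sInf {a : Ordinal | ∀ f : Ordinal → Ordinal, (∀ i < θo, f i < lamo) → GHrank θo f < a}

/-- A weakly inaccessible cardinal: an uncountable regular limit cardinal. -/
def IsWInaccessible (c : Cardinal) : Prop := ℵ₀ < c ∧ c.IsRegular ∧ Order.IsSuccLimit c

/-! ### Auxiliary lemmas -/

lemma accRank_eq {α : Type*} {r : α → α → Prop} {a : α} (h : Acc r a) :
    accRank h = sSup (Set.range fun y : {y : α // r y a} => Order.succ (accRank (h.inv y.2))) := by
  cases h with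
  | intro x hx => rfl

lemma GHrank_of_acc {θo : Ordinal} {f} (h : Acc (ltBd θo) f) : GHrank θo f = accRank h :=
  dif_pos h

lemma GHrank_eq {θo : Ordinal} {f} (hf : Acc (ltBd θo) f) :
    GHrank θo f = sSup ((fun g => Order.succ (GHrank θo g)) '' {g | ltBd θo g f}) := by
  rw [GHrank_of_acc hf, accRank_eq]
  congr 1
  ext x
  constructor
  · rintro ⟨⟨g, hg⟩, rfl⟩
    refine ⟨g, hg, ?_⟩
    show Order.succ (GHrank θo g) = Order.succ (accRank (hf.inv hg))
    rw [GHrank_of_acc (hf.inv hg)]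
  · rintro ⟨g, hg, rfl⟩
    refine ⟨⟨g, hg⟩, ?_⟩
    show Order.succ (accRank (hf.inv hg)) = Order.succ (GHrank θo g)
    rw [GHrank_of_acc (hf.inv hg)]

/-- tail equality below `θo` -/
def TailEq (θo : Ordinal) (g₁ g₂ : Ordinal → Ordinal) : Prop :=
  ∃ β < θo, ∀ i, β ≤ i → i < θo → g₁ i = g₂ i

lemma ltBd_congr_right {θo : Ordinal.{0}} {f₁ f₂ : Ordinal.{0} → Ordinal.{0}}
    (h : TailEq θo f₁ f₂) (g : Ordinal.{0} → Ordinal.{0}) : ltBd θo g f₁ ↔ ltBd θo g f₂ := by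
  obtain ⟨β₀, hβ₀, he⟩ := h
  constructor <;> rintro ⟨β, hβ, hlt⟩ <;>
    refine ⟨max β β₀, max_lt hβ hβ₀, fun i h1 h2 => ?_⟩
  · rw [← he i (le_trans (le_max_right _ _) h1) h2]
    exact hlt i (le_trans (le_max_left _ _) h1) h2
  · rw [he i (le_trans (le_max_right _ _) h1) h2]
    exact hlt i (le_trans (le_max_left _ _) h1) h2

lemma ltBd_wf {θo : Ordinal.{0}} (h : ℵ₀ < θo.cof) :
    WellFounded (ltBd θo : (Ordinal.{0} → Ordinal.{0}) → _ → Prop) := by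
  constructor
  intro f
  by_contra hf
  have step : ∀ g : Ordinal.{0} → Ordinal.{0}, ¬ Acc (ltBd θo) g →
      ∃ g', ltBd θo g' g ∧ ¬ Acc (ltBd θo) g' := by
    intro g hg
    by_contra hc
    push_neg at hc
    exact hg (Acc.intro g fun g' hr => hc g' hr)
  choose nxt hnxt1 hnxt2 using step
  let u : ℕ → {g : Ordinal.{0} → Ordinal.{0} // ¬ Acc (ltBd θo) g} := fun n =>
    Nat.rec ⟨f, hf⟩ (fun _ p => ⟨nxt p.1 p.2, hnxt2 p.1 p.2⟩) n
  have hchain : ∀ n, ltBd θo (u (n + 1)).1 (u n).1 := fun n => hnxt1 _ _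
  choose β hβ hlt using hchain
  have hBlt : (⨆ n, β n) < θo :=
    Ordinal.iSup_lt_ord (by rw [Cardinal.mk_nat]; exact h) hβ
  have hBle : ∀ n, β n ≤ ⨆ n, β n := fun n => Ordinal.le_iSup β n
  have hdec : ∀ n : ℕ, (u (n + 1)).1 (⨆ n, β n) < (u n).1 (⨆ n, β n) := fun n =>
    hlt n _ (hBle n) hBlt
  set s := Set.range (fun n => (u n).1 (⨆ n, β n)) with hs
  have hsne : s.Nonempty := ⟨_, Set.mem_range_self 0⟩
  have hmem := Ordinal.lt_wf.min_mem s hsne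
  obtain ⟨k, hk⟩ := hmem
  refine Ordinal.lt_wf.not_lt_min s (Set.mem_range_self (k + 1)) ?_
  simp only at hk
  rw [← hk]
  exact hdec k

lemma GHrank_congr {θo : Ordinal.{0}}
    (wf : WellFounded (ltBd θo : (Ordinal.{0} → Ordinal.{0}) → _ → Prop))
    {f₁ f₂ : Ordinal.{0} → Ordinal.{0}}
    (h : TailEq θo f₁ f₂) : GHrank θo f₁ = GHrank θo f₂ := by
  rw [GHrank_eq (wf.apply f₁), GHrank_eq (wf.apply f₂)]
  have he : {g | ltBd θo g f₁} = {g | ltBd θo g f₂} := Set.ext fun g => ltBd_congr_right h g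
  rw [he]

lemma bddAbove_ranks {θo : Ordinal.{0}}
    (wf : WellFounded (ltBd θo : (Ordinal.{0} → Ordinal.{0}) → _ → Prop))
    (f : Ordinal.{0} → Ordinal.{0}) :
    BddAbove ((fun g => Order.succ (GHrank θo g)) '' {g | ltBd θo g f}) := by
  set F := fun g : Ordinal.{0} → Ordinal.{0} => Order.succ (GHrank θo g) with hF
  set D := {h : Ordinal.{0} → Ordinal.{0} | ∀ i, (i < θo ∧ h i < f i) ∨ h i = 0} with hD
  have hsub : F '' {g | ltBd θo g f} ⊆ F '' D := by
    rintro x ⟨g, hg, rfl⟩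
    refine ⟨fun i => if i < θo ∧ g i < f i then g i else 0, ?_, ?_⟩
    · intro i
      dsimp only
      by_cases hc : i < θo ∧ g i < f i
      · rw [if_pos hc]; exact Or.inl hc
      · rw [if_neg hc]; exact Or.inr rfl
    · have ht : TailEq θo (fun i => if i < θo ∧ g i < f i then g i else 0) g := by
        obtain ⟨β, hβ, hlt⟩ := hg
        exact ⟨β, hβ, fun i h1 h2 => by dsimp only; rw [if_pos ⟨h2, hlt i h1 h2⟩]⟩
      simp only [F]
      rw [GHrank_congr wf ht]
  have hDsmall : Small.{0} D := by
    let emb : D → (∀ i : Set.Iio θo, Set.Iio (Order.succ (f i.1))) := fun h i =>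
      ⟨h.1 i.1, by
        rcases h.2 i.1 with h' | h'
        · exact Order.lt_succ_iff.2 h'.2.le
        · rw [h']; exact Order.lt_succ_iff.2 (zero_le (a := f i.1))⟩
    have hinj : Function.Injective emb := by
      intro a b hab
      apply Subtype.ext
      funext i
      by_cases hi : i < θo
      · exact Subtype.ext_iff.1 (congrFun hab ⟨i, hi⟩)
      · have ha : a.1 i = 0 := by
          rcases a.2 i with h' | h'
          · exact absurd h'.1 hi
          · exact h'
        have hb : b.1 i = 0 := by
          rcases b.2 i with h' | h'
          · exact absurd h'.1 hi
          · exact h'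
        rw [ha, hb]
    exact small_of_injective hinj
  have h2 : Small.{0} (F '' D) := small_image F D
  have h3 : Small.{0} (F '' {g | ltBd θo g f}) := small_subset hsub
  exact Ordinal.bddAbove_of_small

lemma GHrank_lt {θo : Ordinal.{0}}
    (wf : WellFounded (ltBd θo : (Ordinal.{0} → Ordinal.{0}) → _ → Prop))
    {g f : Ordinal.{0} → Ordinal.{0}} (hgf : ltBd θo g f) : GHrank θo g < GHrank θo f := by
  have h1 : Order.succ (GHrank θo g) ≤ GHrank θo f := by
    rw [GHrank_eq (wf.apply f)]
    exact le_csSup (bddAbove_ranks wf f) ⟨g, hgf, rfl⟩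
  exact (Order.lt_succ _).trans_le h1

def GHset (θo lamo : Ordinal.{0}) : Set Ordinal.{0} :=
  {a : Ordinal.{0} | ∀ f : Ordinal.{0} → Ordinal.{0}, (∀ i < θo, f i < lamo) → GHrank θo f < a}

lemma GHbound_eq (θo lamo : Ordinal.{0}) : GHbound θo lamo = sInf (GHset θo lamo) := rfl

lemma sInf_empty_ord : sInf (∅ : Set Ordinal.{0}) = 0 := dif_neg (by simp)

lemma GHset_mono {θo b c : Ordinal.{0}} (h : b ≤ c) : GHset θo c ⊆ GHset θo b :=
  fun _ ha f hf => ha f (fun i hi => lt_of_lt_of_le (hf i hi) h)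

lemma exists_bound {θo : Ordinal.{0}} (κ : Cardinal.{0}) (hκreg : κ.IsRegular)
    (hθκ : θo.card < κ) (s : Ordinal.{0} → Ordinal.{0})
    (hmono : StrictMonoOn s (Set.Iio κ.ord)) {g : Ordinal.{0} → Ordinal.{0}}
    (hg : ∀ i < θo, g i < sSup (s '' Set.Iio κ.ord)) :
    ∃ j < κ.ord, ∀ i < θo, g i < s j := by
  have hκpos : 0 < κ.ord := hκreg.ord_pos
  have hbdd : BddAbove (s '' Set.Iio κ.ord) := Ordinal.bddAbove_of_small
  have hne : (s '' Set.Iio κ.ord).Nonempty := ⟨s 0, ⟨0, hκpos, rfl⟩⟩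
  have hch : ∀ i, i < θo → ∃ j, j < κ.ord ∧ g i < s j := by
    intro i hi
    obtain ⟨x, ⟨j, hj, rfl⟩, hx⟩ := (lt_csSup_iff hbdd hne).1 (hg i hi)
    exact ⟨j, hj, hx⟩
  choose j hj1 hj2 using hch
  have hlimκ : Order.IsSuccLimit κ.ord := Cardinal.isSuccLimit_ord hκreg.aleph0_le
  have hJκ : Ordinal.bsup θo (fun i hi => j i hi + 1) < κ.ord :=
    Ordinal.bsup_lt_ord (by rw [hκreg.cof_eq]; exact hθκ)
      (fun i hi => by rw [Ordinal.add_one_eq_succ]; exact hlimκ.succ_lt (hj1 i hi))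
  refine ⟨Ordinal.bsup θo (fun i hi => j i hi + 1), hJκ, fun i hi => ?_⟩
  have hjJ : j i hi < Ordinal.bsup θo (fun i hi => j i hi + 1) :=
    lt_of_lt_of_le (by rw [Ordinal.add_one_eq_succ]; exact Order.lt_succ _)
      (Ordinal.le_bsup _ i hi)
  exact (hj2 i hi).trans (hmono (hj1 i hi) hJκ hjJ)

noncomputable def seqT (Φ : Ordinal.{0} → Ordinal.{0}) : Ordinal.{0} → Ordinal.{0} :=
  fun α => Φ (sSup (Set.range fun β : Set.Iio α => seqT Φ β.1))
termination_by α => α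
decreasing_by exact β.2

lemma seqT_def (Φ : Ordinal.{0} → Ordinal.{0}) (α : Ordinal.{0}) :
    seqT Φ α = Φ (sSup (Set.range fun β : Set.Iio α => seqT Φ β.1)) := by
  rw [seqT]

lemma seqT_strictMono {Φ : Ordinal.{0} → Ordinal.{0}} (hΦ : ∀ x, x < Φ x) :
    StrictMono (seqT Φ) := by
  intro β α hβα
  have h1 : seqT Φ β ≤ sSup (Set.range fun β : Set.Iio α => seqT Φ β.1) :=
    le_csSup (Ordinal.bddAbove_of_small) ⟨⟨β, hβα⟩, rfl⟩
  calc seqT Φ β ≤ _ := h1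
    _ < _ := hΦ _
    _ = seqT Φ α := (seqT_def Φ α).symm

theorem stmt9 (lam θ : Cardinal) (hw : IsWInaccessible lam)
    (hθreg : θ.IsRegular) (hθ0 : ℵ₀ < θ) (hθlam : θ < lam)
    (hGH : GHbound θ.ord lam.ord = lam.ord) :
    (∀ κ : Cardinal, κ.IsRegular → θ < κ →
      ∀ f : Ordinal → Ordinal, StrictMonoOn f (Set.Iio κ.ord) →
        (∀ i < κ.ord, f i ∈ {δ : Ordinal | δ < lam.ord ∧ GHbound θ.ord δ = δ}) →
        sSup (f '' Set.Iio κ.ord) < lam.ord →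
        sSup (f '' Set.Iio κ.ord) ∈ {δ : Ordinal | δ < lam.ord ∧ GHbound θ.ord δ = δ}) ∧
    (∀ b < lam.ord, ∃ δ ∈ {δ : Ordinal | δ < lam.ord ∧ GHbound θ.ord δ = δ}, b < δ) := by
  obtain ⟨hlamℵ, hlamreg, hlamlim⟩ := hw
  set θo := θ.ord with hθo
  have hθcof : ℵ₀ < θo.cof := by rw [hθreg.cof_eq]; exact hθ0
  have wf := ltBd_wf hθcof
  have hθpos : 0 < θo := hθreg.ord_pos
  have hθcard : θo.card = θ := Cardinal.card_ord θ
  have hlamlimo : Order.IsSuccLimit lam.ord := Cardinal.isSuccLimit_ord hlamreg.aleph0_le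
  have hlam0 : lam.ord ≠ 0 := hlamlimo.pos.ne'
  have hSlam_ne : (GHset θo lam.ord).Nonempty := by
    by_contra h
    rw [Set.not_nonempty_iff_eq_empty] at h
    rw [GHbound_eq, h, sInf_empty_ord] at hGH
    exact hlam0 hGH.symm
  have hlam_mem : lam.ord ∈ GHset θo lam.ord := by
    have := csInf_mem hSlam_ne
    rwa [← GHbound_eq, hGH] at this
  have hmemS : ∀ b, b ≤ lam.ord → lam.ord ∈ GHset θo b := fun b hb => GHset_mono hb hlam_mem
  have hGHbound_mem : ∀ b, b ≤ lam.ord → GHbound θo b ∈ GHset θo b := fun b hb => by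
    rw [GHbound_eq]; exact csInf_mem ⟨_, hmemS b hb⟩
  have hGHbound_lt_lam : ∀ b, b < lam.ord → GHbound θo b < lam.ord := by
    intro b hb
    have hC : GHrank θo (fun _ => b) < lam.ord := hlam_mem _ (fun i _ => hb)
    have hmem : GHrank θo (fun _ => b) ∈ GHset θo b := fun f hf =>
      GHrank_lt wf ⟨0, hθpos, fun i _ hi => hf i hi⟩
    exact lt_of_le_of_lt (by rw [GHbound_eq]; exact csInf_le' hmem) hC
  have hGHmono : ∀ b c : Ordinal, b ≤ c → c ≤ lam.ord → GHbound θo b ≤ GHbound θo c := by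
    intro b c hbc hc
    rw [GHbound_eq, GHbound_eq]
    exact csInf_le_csInf (OrderBot.bddBelow _) ⟨_, hmemS c hc⟩ (GHset_mono hbc)
  have hhigh : ∀ a, a < lam.ord → ∃ γ, γ < lam.ord ∧
      ∃ f : Ordinal.{0} → Ordinal.{0}, (∀ i < θo, f i < γ) ∧ a ≤ GHrank θo f := by
    intro a ha
    have hna : a ∉ GHset θo lam.ord := by
      intro h
      have h2 : GHbound θo lam.ord ≤ a := by rw [GHbound_eq]; exact csInf_le' h
      rw [hGH] at h2
      exact absurd ha (not_lt.2 h2)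
    simp only [GHset, Set.mem_setOf_eq] at hna
    push_neg at hna
    obtain ⟨f, hf, hra⟩ := hna
    refine ⟨Ordinal.bsup θo (fun i _ => f i + 1), ?_, f, fun i hi => ?_, hra⟩
    · refine Ordinal.bsup_lt_ord ?_ (fun i hi => ?_)
      · rw [hlamreg.cof_eq, hθcard]; exact hθlam
      · rw [Ordinal.add_one_eq_succ]; exact hlamlimo.succ_lt (hf i hi)
    · exact lt_of_lt_of_le (by rw [Ordinal.add_one_eq_succ]; exact Order.lt_succ _)
        (Ordinal.le_bsup _ i hi)
  constructor
  · -- closure under increasing suprema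
    intro κ hκreg hθκ f hmono hmem hδ
    have hbdd : BddAbove (f '' Set.Iio κ.ord) := Ordinal.bddAbove_of_small
    have hne : (f '' Set.Iio κ.ord).Nonempty := ⟨f 0, ⟨0, hκreg.ord_pos, rfl⟩⟩
    refine ⟨hδ, le_antisymm ?_ ?_⟩
    · -- GHbound δ ≤ δ
      rw [GHbound_eq]
      refine csInf_le' ?_
      intro g hg
      obtain ⟨j, hj, hgj⟩ := exists_bound κ hκreg (by rw [hθcard]; exact hθκ) f hmono hg
      obtain ⟨hfj1, hfj2⟩ := hmem j hj
      have hmemj : GHbound θo (f j) ∈ GHset θo (f j) := hGHbound_mem _ hfj1.le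
      have h1 : GHrank θo g < f j := by rw [← hfj2]; exact hmemj g hgj
      exact lt_of_lt_of_le h1 (le_csSup hbdd ⟨j, hj, rfl⟩)
    · -- δ ≤ GHbound δ
      rw [GHbound_eq]
      refine le_csInf ⟨_, hmemS _ hδ.le⟩ ?_
      intro x hx
      by_contra hxδ
      push_neg at hxδ
      obtain ⟨y, ⟨j, hj, rfl⟩, hxy⟩ := (lt_csSup_iff hbdd hne).1 hxδ
      obtain ⟨hfj1, hfj2⟩ := hmem j hj
      have hna : x ∉ GHset θo (f j) := by
        intro h
        have h2 : GHbound θo (f j) ≤ x := by rw [GHbound_eq]; exact csInf_le' h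
        rw [hfj2] at h2
        exact absurd hxy (not_lt.2 h2)
      simp only [GHset, Set.mem_setOf_eq] at hna
      push_neg at hna
      obtain ⟨g, hgin, hgr⟩ := hna
      have hgδ : ∀ i < θo, g i < sSup (f '' Set.Iio κ.ord) := fun i hi =>
        lt_of_lt_of_le (hgin i hi) (le_csSup hbdd ⟨j, hj, rfl⟩)
      exact absurd (hx g hgδ) (not_lt.2 hgr)
  · -- unboundedness
    intro b hb
    set κ := Order.succ θ with hκ
    have hκreg : κ.IsRegular := Cardinal.isRegular_succ hθreg.aleph0_le
    have hθκ : θ < κ := Order.lt_succ θ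
    have hκlam : κ < lam := hlamlim.succ_lt hθlam
    have hlimκ : Order.IsSuccLimit κ.ord := Cardinal.isSuccLimit_ord hκreg.aleph0_le
    have hwitex : ∀ y : Ordinal.{0}, ∃ γ, y < lam.ord → γ < lam.ord ∧
        ∃ f : Ordinal.{0} → Ordinal.{0}, (∀ i < θo, f i < γ) ∧ y ≤ GHrank θo f := by
      intro y
      by_cases h : y < lam.ord
      · obtain ⟨γ, h1, h2⟩ := hhigh y h
        exact ⟨γ, fun _ => ⟨h1, h2⟩⟩
      · exact ⟨0, fun h' => absurd h' h⟩
    choose γwit hγwit using hwitex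
    set Φ : Ordinal.{0} → Ordinal.{0} :=
      fun x => max (max (Order.succ b) (Order.succ x)) (max (GHbound θo x) (γwit x)) with hΦdef
    have hΦ : ∀ x, x < Φ x := fun x =>
      lt_of_lt_of_le (Order.lt_succ x) (le_trans (le_max_right _ _) (le_max_left _ _))
    have hΦlt : ∀ x, x < lam.ord → Φ x < lam.ord := by
      intro x hx
      refine max_lt (max_lt ?_ ?_) (max_lt ?_ ?_)
      · exact hlamlimo.succ_lt hb
      · exact hlamlimo.succ_lt hx
      · exact hGHbound_lt_lam x hx
      · exact (hγwit x hx).1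
    have hsmono : StrictMono (seqT Φ) := seqT_strictMono hΦ
    have hTle : ∀ α : Ordinal,
        sSup (Set.range fun β : Set.Iio α => seqT Φ β.1) ≤
          Ordinal.bsup α (fun β _ => seqT Φ β) := by
      intro α
      refine csSup_le' ?_
      rintro x ⟨⟨β, hβ⟩, rfl⟩
      exact Ordinal.le_bsup _ β hβ
    have hslt : ∀ α, α < κ.ord → seqT Φ α < lam.ord := by
      intro α
      induction α using Ordinal.induction with
      | h α IH =>
        intro hα
        rw [seqT_def]
        apply hΦlt
        refine lt_of_le_of_lt (hTle α) ?_
        refine Ordinal.bsup_lt_ord ?_ (fun β hβ => IH β hβ (hβ.trans hα))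
        rw [hlamreg.cof_eq]
        exact (Cardinal.lt_ord.1 hα).trans hκlam
    have hTlt : ∀ α, α < κ.ord →
        sSup (Set.range fun β : Set.Iio α => seqT Φ β.1) < lam.ord := by
      intro α hα
      refine lt_of_le_of_lt (hTle α) ?_
      refine Ordinal.bsup_lt_ord ?_ (fun β hβ => hslt β (hβ.trans hα))
      rw [hlamreg.cof_eq]
      exact (Cardinal.lt_ord.1 hα).trans hκlam
    have hbddδ : BddAbove (seqT Φ '' Set.Iio κ.ord) := Ordinal.bddAbove_of_small
    have hneδ : (seqT Φ '' Set.Iio κ.ord).Nonempty := ⟨_, ⟨0, hκreg.ord_pos, rfl⟩⟩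
    have hδlam : sSup (seqT Φ '' Set.Iio κ.ord) < lam.ord := by
      refine lt_of_le_of_lt (csSup_le' ?_)
        (?_ : Ordinal.bsup κ.ord (fun β _ => seqT Φ β) < lam.ord)
      · rintro x ⟨β, hβ, rfl⟩
        exact Ordinal.le_bsup _ β hβ
      · refine Ordinal.bsup_lt_ord ?_ (fun β hβ => hslt β hβ)
        rw [hlamreg.cof_eq, Cardinal.card_ord]
        exact hκlam
    refine ⟨sSup (seqT Φ '' Set.Iio κ.ord), ⟨hδlam, le_antisymm ?_ ?_⟩, ?_⟩
    · -- GHbound δ ≤ δ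
      rw [GHbound_eq]
      refine csInf_le' ?_
      intro g hg
      obtain ⟨j, hj, hgj⟩ :=
        exists_bound κ hκreg (by rw [hθcard]; exact hθκ) (seqT Φ) (hsmono.strictMonoOn _) hg
      have hjsucc : Order.succ j < κ.ord := hlimκ.succ_lt hj
      have hsj_le_T : seqT Φ j ≤ sSup (Set.range fun β : Set.Iio (Order.succ j) => seqT Φ β.1) :=
        le_csSup (Ordinal.bddAbove_of_small) ⟨⟨j, Order.lt_succ j⟩, rfl⟩
      have h1 : GHrank θo g < GHbound θo (seqT Φ j) := (hGHbound_mem _ (hslt j hj).le) g hgj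
      have h2 : GHbound θo (seqT Φ j) ≤
          GHbound θo (sSup (Set.range fun β : Set.Iio (Order.succ j) => seqT Φ β.1)) :=
        hGHmono _ _ hsj_le_T (hTlt _ hjsucc).le
      have h3 : GHbound θo (sSup (Set.range fun β : Set.Iio (Order.succ j) => seqT Φ β.1)) ≤
          Φ (sSup (Set.range fun β : Set.Iio (Order.succ j) => seqT Φ β.1)) :=
        le_trans (le_max_left _ _) (le_max_right _ _)
      have h4 : Φ (sSup (Set.range fun β : Set.Iio (Order.succ j) => seqT Φ β.1)) =
          seqT Φ (Order.succ j) := (seqT_def Φ _).symm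
      have h5 : seqT Φ (Order.succ j) ≤ sSup (seqT Φ '' Set.Iio κ.ord) :=
        le_csSup hbddδ ⟨_, hjsucc, rfl⟩
      exact lt_of_lt_of_le h1 (le_trans h2 (le_trans h3 (h4 ▸ h5)))
    · -- δ ≤ GHbound δ
      rw [GHbound_eq]
      refine le_csInf ⟨_, hmemS _ hδlam.le⟩ ?_
      intro x hx
      by_contra hxδ
      push_neg at hxδ
      obtain ⟨y, ⟨j, hj, rfl⟩, hxy⟩ := (lt_csSup_iff hbddδ hneδ).1 hxδ
      have hjsucc : Order.succ j < κ.ord := hlimκ.succ_lt hj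
      have hsjT : seqT Φ j ≤ sSup (Set.range fun β : Set.Iio (Order.succ j) => seqT Φ β.1) :=
        le_csSup (Ordinal.bddAbove_of_small) ⟨⟨j, Order.lt_succ j⟩, rfl⟩
      have hT1lam : sSup (Set.range fun β : Set.Iio (Order.succ j) => seqT Φ β.1) < lam.ord :=
        hTlt _ hjsucc
      obtain ⟨hγlt, g, hgin, hgr⟩ := hγwit _ hT1lam
      have hγle : γwit (sSup (Set.range fun β : Set.Iio (Order.succ j) => seqT Φ β.1)) ≤
          Φ (sSup (Set.range fun β : Set.Iio (Order.succ j) => seqT Φ β.1)) :=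
        le_trans (le_max_right _ _) (le_max_right _ _)
      have h4 : Φ (sSup (Set.range fun β : Set.Iio (Order.succ j) => seqT Φ β.1)) =
          seqT Φ (Order.succ j) := (seqT_def Φ _).symm
      have h5 : seqT Φ (Order.succ j) ≤ sSup (seqT Φ '' Set.Iio κ.ord) :=
        le_csSup hbddδ ⟨_, hjsucc, rfl⟩
      have hgδ : ∀ i < θo, g i < sSup (seqT Φ '' Set.Iio κ.ord) := fun i hi =>
        lt_of_lt_of_le (hgin i hi) (le_trans hγle (le_trans (le_of_eq h4) h5))
      have hxr : x < GHrank θo g := lt_of_lt_of_le hxy (le_trans hsjT hgr)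
      exact absurd (hx g hgδ) (not_lt.2 hxr.le)
    · -- b < δ
      have h0 : b < seqT Φ 0 := by
        rw [seqT_def]
        exact lt_of_lt_of_le (Order.lt_succ b) (le_trans (le_max_left _ _) (le_max_left _ _))
      exact h0.trans_le (le_csSup hbddδ ⟨0, hκreg.ord_pos, rfl⟩)

end Paper
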